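/- Let β : ℝ → ℝ be continuous on [x_j, α] with value β⁻ at α (from the left) and continuous on [α, x_{j+1}] with value β⁺ at α (from the right), with β(x) ≥ β₀ > 0 everywhere. Suppose |β(x) − β⁻| ≤ L(α − x) for x ∈ [x_j, α] and |β(x) − β⁺| ≤ L(x − α) for x ∈ [α, x_{j+1}], where h = x_{j+1} − x_j. Then the harmonic average β_{j+1/2} = ((1/h)∫_{x_j}^{x_{j+1}} β(x)^{-1}dx)^{-1} satisfies |β_{j+1/2} − β̄| ≤ C·h for a constant C depending only on β₀, L, max β, where β̄ = ((x_{j+1}−α)/(β⁺h) + (α−x_j)/(β⁻h))^{-1}. -/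

import Mathlib

open Real Set intervalIntegral MeasureTheory

lemma stmt4_aux (β₀ Mβ L c δ : ℝ) (hδ : 0 < δ) (hL : 0 ≤ L)
    (H : ∀ ε, 0 < ε → ε < δ → ∃ v, β₀ ≤ v ∧ v ≤ Mβ ∧ |v - c| ≤ L * ε) :
    β₀ ≤ c ∧ c ≤ Mβ := by
  have key : ∀ ε, 0 < ε → ε < δ → β₀ - L * ε ≤ c ∧ c ≤ Mβ + L * ε := by
    intro ε h1 h2
    obtain ⟨v, hv1, hv2, hv3⟩ := H ε h1 h2
    rw [abs_le] at hv3
    exact ⟨by linarith [hv3.2], by linarith [hv3.1]⟩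
  constructor
  · by_contra hlt
    push_neg at hlt
    set ε := min (δ/2) ((β₀ - c)/(2*(L+1))) with hε
    have hε1 : 0 < ε := lt_min (by linarith) (div_pos (by linarith) (by positivity))
    have hε2 : ε < δ := (min_le_left _ _).trans_lt (by linarith)
    have h3 := (key ε hε1 hε2).1
    have h4 : ε ≤ (β₀ - c)/(2*(L+1)) := min_le_right _ _
    rw [le_div_iff₀ (by positivity)] at h4
    nlinarith
  · by_contra hlt
    push_neg at hlt
    set ε := min (δ/2) ((c - Mβ)/(2*(L+1))) with hε
    have hε1 : 0 < ε := lt_min (by linarith) (div_pos (by linarith) (by positivity))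
    have hε2 : ε < δ := (min_le_left _ _).trans_lt (by linarith)
    have h3 := (key ε hε1 hε2).2
    have h4 : ε ≤ (c - Mβ)/(2*(L+1)) := min_le_right _ _
    rw [le_div_iff₀ (by positivity)] at h4
    nlinarith

/-- For a coefficient Lipschitz on each side of the discontinuity `α` and bounded
below by `β₀ > 0` and above by `Mβ`, the harmonic average over `[x_j, x_{j+1}]`
differs from the two-value weighted harmonic mean `β̄` by at most `C·h`, with `C`
depending only on `β₀`, `L`, `Mβ`. -/
theorem stmt4 (β₀ L Mβ : ℝ) (hβ₀ : 0 < β₀) (hL : 0 ≤ L) (hM : β₀ ≤ Mβ) :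
    ∃ C > 0, ∀ (xj α xj1 h : ℝ) (β : ℝ → ℝ) (βm βp : ℝ),
      xj < α → α < xj1 → h = xj1 - xj →
      ContinuousOn β (Ico xj α) → ContinuousOn β (Ioc α xj1) →
      (∀ x, β₀ ≤ β x) → (∀ x, β x ≤ Mβ) →
      (∀ x ∈ Ico xj α, |β x - βm| ≤ L * (α - x)) →
      (∀ x ∈ Ioc α xj1, |β x - βp| ≤ L * (x - α)) →
      IntervalIntegrable (fun x => (β x)⁻¹) volume xj xj1 →
      |((1 / h) * ∫ x in xj..xj1, (β x)⁻¹)⁻¹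
          - ((xj1 - α) / (βp * h) + (α - xj) / (βm * h))⁻¹| ≤ C * h := by
  have hMpos : 0 < Mβ := hβ₀.trans_le hM
  refine ⟨2 * L * Mβ^2 / β₀^2 + 1, by positivity, ?_⟩
  intro xj α xj1 h β βm βp hxa hax hh _ _ hlb hub hlip1 hlip2 hint
  have hβpos : ∀ x, 0 < β x := fun x => hβ₀.trans_le (hlb x)
  have hhpos : 0 < h := by rw [hh]; linarith
  have hβm : β₀ ≤ βm ∧ βm ≤ Mβ := by
    refine stmt4_aux β₀ Mβ L βm (α - xj) (by linarith) hL (fun ε hε1 hε2 => ?_)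
    refine ⟨β (α - ε), hlb _, hub _, ?_⟩
    have := hlip1 (α - ε) ⟨by linarith, by linarith⟩
    simpa using this
  have hβp : β₀ ≤ βp ∧ βp ≤ Mβ := by
    refine stmt4_aux β₀ Mβ L βp (xj1 - α) (by linarith) hL (fun ε hε1 hε2 => ?_)
    refine ⟨β (α + ε), hlb _, hub _, ?_⟩
    have := hlip2 (α + ε) ⟨by linarith, by linarith⟩
    simpa using this
  have hbm0 : (0:ℝ) < βm := hβ₀.trans_le hβm.1
  have hbp0 : (0:ℝ) < βp := hβ₀.trans_le hβp.1
  have hint1 : IntervalIntegrable (fun x => (β x)⁻¹) volume xj α := by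
    apply hint.mono_set
    rw [uIcc_of_le hxa.le, uIcc_of_le (by linarith : xj ≤ xj1)]
    exact Icc_subset_Icc le_rfl (by linarith)
  have hint2 : IntervalIntegrable (fun x => (β x)⁻¹) volume α xj1 := by
    apply hint.mono_set
    rw [uIcc_of_le hax.le, uIcc_of_le (by linarith : xj ≤ xj1)]
    exact Icc_subset_Icc (by linarith) le_rfl
  have hne : ∀ᵐ x : ℝ ∂volume, x ≠ α := by
    refine ae_iff.mpr ?_
    simp only [ne_eq, not_not, setOf_eq_eq_singleton]
    exact measure_singleton α
  -- left estimate
  have hleft : |(∫ x in xj..α, (β x)⁻¹) - (α - xj)/βm| ≤ L*h/β₀^2 * h := by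
    have hconst : ∫ _x in xj..α, (βm:ℝ)⁻¹ = (α - xj) / βm := by
      rw [intervalIntegral.integral_const, smul_eq_mul, div_eq_mul_inv]
    rw [← hconst, ← intervalIntegral.integral_sub hint1 intervalIntegrable_const]
    have hae : ∀ᵐ x : ℝ ∂volume, x ∈ Set.uIoc xj α → ‖(β x)⁻¹ - βm⁻¹‖ ≤ L*h/β₀^2 := by
      filter_upwards [hne] with x hx hmem
      rw [uIoc_of_le hxa.le] at hmem
      have hx1 : x ∈ Ico xj α := ⟨hmem.1.le, lt_of_le_of_ne hmem.2 hx⟩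
      have hb := hlip1 x hx1
      rw [Real.norm_eq_abs, inv_sub_inv (hβpos x).ne' hbm0.ne', abs_div]
      apply div_le_div₀ (by positivity) ?_ (by positivity) ?_
      · calc |βm - β x| = |β x - βm| := abs_sub_comm _ _
          _ ≤ L * (α - x) := hb
          _ ≤ L * h := mul_le_mul_of_nonneg_left (by linarith [hx1.1]) hL
      · rw [abs_mul, abs_of_pos (hβpos x), abs_of_pos hbm0]
        nlinarith [hlb x, hβm.1]
    calc ‖∫ x in xj..α, ((β x)⁻¹ - βm⁻¹)‖ ≤ L*h/β₀^2 * |α - xj| :=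
          intervalIntegral.norm_integral_le_of_norm_le_const_ae hae
      _ ≤ L*h/β₀^2 * h := by
          apply mul_le_mul_of_nonneg_left _ (by positivity)
          rw [abs_of_pos (by linarith)]; linarith
  -- right estimate
  have hright : |(∫ x in α..xj1, (β x)⁻¹) - (xj1 - α)/βp| ≤ L*h/β₀^2 * h := by
    have hconst : ∫ _x in α..xj1, (βp:ℝ)⁻¹ = (xj1 - α) / βp := by
      rw [intervalIntegral.integral_const, smul_eq_mul, div_eq_mul_inv]
    rw [← hconst, ← intervalIntegral.integral_sub hint2 intervalIntegrable_const]
    have hae : ∀ᵐ x : ℝ ∂volume, x ∈ Set.uIoc α xj1 → ‖(β x)⁻¹ - βp⁻¹‖ ≤ L*h/β₀^2 := by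
      filter_upwards [] with x hmem
      rw [uIoc_of_le hax.le] at hmem
      have hb := hlip2 x hmem
      rw [Real.norm_eq_abs, inv_sub_inv (hβpos x).ne' hbp0.ne', abs_div]
      apply div_le_div₀ (by positivity) ?_ (by positivity) ?_
      · calc |βp - β x| = |β x - βp| := abs_sub_comm _ _
          _ ≤ L * (x - α) := hb
          _ ≤ L * h := mul_le_mul_of_nonneg_left (by linarith [hmem.2]) hL
      · rw [abs_mul, abs_of_pos (hβpos x), abs_of_pos hbp0]
        nlinarith [hlb x, hβp.1]
    calc ‖∫ x in α..xj1, ((β x)⁻¹ - βp⁻¹)‖ ≤ L*h/β₀^2 * |xj1 - α| :=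
          intervalIntegral.norm_integral_le_of_norm_le_const_ae hae
      _ ≤ L*h/β₀^2 * h := by
          apply mul_le_mul_of_nonneg_left _ (by positivity)
          rw [abs_of_pos (by linarith)]; linarith
  set I := ∫ x in xj..xj1, (β x)⁻¹ with hIdef
  set J := (α - xj)/βm + (xj1 - α)/βp with hJdef
  have hsplit : I = (∫ x in xj..α, (β x)⁻¹) + ∫ x in α..xj1, (β x)⁻¹ :=
    (intervalIntegral.integral_add_adjacent_intervals hint1 hint2).symm
  have hIJ : |I - J| ≤ 2*(L*h/β₀^2*h) := by
    have heq : I - J = ((∫ x in xj..α, (β x)⁻¹) - (α - xj)/βm)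
        + ((∫ x in α..xj1, (β x)⁻¹) - (xj1 - α)/βp) := by
      rw [hsplit, hJdef]; ring
    rw [heq]
    exact (abs_add_le _ _).trans (by linarith)
  have hIge : h / Mβ ≤ I := by
    have h1 : ∫ _x in xj..xj1, (Mβ:ℝ)⁻¹ ≤ I :=
      intervalIntegral.integral_mono_on (by linarith) intervalIntegrable_const hint
        (fun x _ => inv_anti₀ (hβpos x) (hub x))
    rwa [intervalIntegral.integral_const, smul_eq_mul, ← hh, ← div_eq_mul_inv] at h1
  have hJge : h / Mβ ≤ J := by
    have h1 : (α - xj)/Mβ ≤ (α - xj)/βm := by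
      apply div_le_div_of_nonneg_left (by linarith) hbm0 hβm.2
    have h2 : (xj1 - α)/Mβ ≤ (xj1 - α)/βp := by
      apply div_le_div_of_nonneg_left (by linarith) hbp0 hβp.2
    have h3 : (α - xj)/Mβ + (xj1 - α)/Mβ = h/Mβ := by rw [hh]; ring
    rw [hJdef]; linarith
  have hIpos : 0 < I := lt_of_lt_of_le (by positivity) hIge
  have hJpos : 0 < J := lt_of_lt_of_le (by positivity) hJge
  have hsum : (xj1 - α)/(βp*h) + (α - xj)/(βm*h) = J/h := by
    rw [hJdef]; field_simp; ring
  have hinv1 : (1/h * I)⁻¹ = h / I := by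
    rw [one_div, ← div_eq_inv_mul, inv_div]
  have hEq : h/I - (J/h)⁻¹ = h*(J - I)/(I*J) := by
    rw [inv_div]
    field_simp
  rw [hsum, hinv1, hEq]
  calc |h*(J - I)/(I*J)| = h * |I - J| / (I*J) := by
        rw [abs_div, abs_mul, abs_of_pos hhpos, abs_of_pos (mul_pos hIpos hJpos),
          abs_sub_comm]
    _ ≤ h * (2*(L*h/β₀^2*h)) / ((h/Mβ)*(h/Mβ)) := by
        apply div_le_div₀ (by positivity) (mul_le_mul_of_nonneg_left hIJ hhpos.le)
          (by positivity) (mul_le_mul hIge hJge (by positivity) hIpos.le)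
    _ ≤ (2 * L * Mβ^2 / β₀^2 + 1) * h := by
        have he : h * (2*(L*h/β₀^2*h)) / ((h/Mβ)*(h/Mβ)) = 2*L*Mβ^2/β₀^2 * h := by
          field_simp
        rw [he]
        nlinarith
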